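/- Let A be an m×m Kirchhoff matrix whose associated directed graph is strongly connected (and has at least one edge, m ≥ 2). Then the kernel of A is one-dimensional and is spanned by a strictly positive vector. -/

import Mathlib

open Matrix Finset

def IsKirchhoff {m : ℕ} (A : Matrix (Fin m) (Fin m) ℝ) : Prop :=
  (∀ i j, i ≠ j → 0 ≤ A i j) ∧ ∀ j, ∑ i, A i j = 0

/-- Edge `j → i` of the reaction graph: `A i j > 0`, `i ≠ j`. -/
def step {m : ℕ} (A : Matrix (Fin m) (Fin m) ℝ) (j i : Fin m) : Prop :=
  i ≠ j ∧ 0 < A i j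

lemma edge_zero {m : ℕ} {A : Matrix (Fin m) (Fin m) ℝ} (hA : IsKirchhoff A)
    {y : Fin m → ℝ} (hy : A.mulVec y = 0) (hpos : ∀ k, 0 ≤ y k)
    {i j : Fin m} (hij : step A j i) (hi : y i = 0) : y j = 0 := by
  have hrow : ∑ k, A i k * y k = 0 := by
    have := congrFun hy i
    simpa [Matrix.mulVec, dotProduct] using this
  have hsplit : A i i * y i + ∑ k ∈ univ.erase i, A i k * y k = 0 := by
    rw [Finset.add_sum_erase univ (fun k => A i k * y k) (mem_univ i)]; exact hrow
  rw [hi, mul_zero, zero_add] at hsplit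
  have hterm : ∀ k ∈ univ.erase i, A i k * y k = 0 :=
    (Finset.sum_eq_zero_iff_of_nonneg (fun k hk =>
      mul_nonneg (hA.1 i k (Finset.mem_erase.mp hk).1.symm) (hpos k))).mp hsplit
  have hjmem : j ∈ univ.erase i := Finset.mem_erase.mpr ⟨fun h => hij.1 h.symm, mem_univ j⟩
  have := hterm j hjmem
  rcases mul_eq_zero.mp this with h | h
  · exact absurd h (ne_of_gt hij.2)
  · exact h

lemma path_zero {m : ℕ} {A : Matrix (Fin m) (Fin m) ℝ} (hA : IsKirchhoff A)
    {y : Fin m → ℝ} (hy : A.mulVec y = 0) (hpos : ∀ k, 0 ≤ y k)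
    {u v : Fin m} (h : Relation.ReflTransGen (step A) u v) : y v = 0 → y u = 0 := by
  induction h with
  | refl => exact id
  | tail _ hbc ih => exact fun hv => ih (edge_zero hA hy hpos hbc hv)

lemma pos_of_nonneg {m : ℕ} {A : Matrix (Fin m) (Fin m) ℝ} (hA : IsKirchhoff A)
    (hconn : ∀ u v : Fin m, Relation.ReflTransGen (step A) u v)
    {y : Fin m → ℝ} (hy : A.mulVec y = 0) (hpos : ∀ k, 0 ≤ y k)
    (hj : ∃ j, 0 < y j) : ∀ i, 0 < y i := by
  intro i
  rcases hj with ⟨j, hj⟩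
  rcases (hpos i).lt_or_eq with h | h
  · exact h
  · exfalso
    have := path_zero hA hy hpos (hconn j i) h.symm
    linarith

lemma pos_part_ker {m : ℕ} {A : Matrix (Fin m) (Fin m) ℝ} (hA : IsKirchhoff A)
    {x : Fin m → ℝ} (hx : A.mulVec x = 0) :
    A.mulVec (fun j => max (x j) 0) = 0 := by
  set y : Fin m → ℝ := fun j => max (x j) 0 with hy
  have hynn : ∀ j, 0 ≤ y j := fun j => le_max_right _ _
  have hyx : ∀ j, x j ≤ y j := fun j => le_max_left _ _
  have hnn : ∀ i, 0 ≤ (A.mulVec y) i := by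
    intro i
    by_cases hxi : 0 ≤ x i
    · have hxi0 : ∑ j, A i j * x j = 0 := by
        have := congrFun hx i
        simpa [Matrix.mulVec, dotProduct] using this
      have hle : ∑ j, A i j * x j ≤ ∑ j, A i j * y j := by
        apply Finset.sum_le_sum
        intro j _
        by_cases hji : j = i
        · subst hji
          have : y j = x j := max_eq_left hxi
          rw [this]
        · exact mul_le_mul_of_nonneg_left (hyx j) (hA.1 i j (Ne.symm hji))
      have : (A.mulVec y) i = ∑ j, A i j * y j := by
        simp [Matrix.mulVec, dotProduct]
      rw [this]; linarith
    · have hyi : y i = 0 := max_eq_right (le_of_not_ge hxi)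
      have : (A.mulVec y) i = ∑ j, A i j * y j := by
        simp [Matrix.mulVec, dotProduct]
      rw [this]
      apply Finset.sum_nonneg
      intro j _
      by_cases hji : j = i
      · subst hji; rw [hyi, mul_zero]
      · exact mul_nonneg (hA.1 i j (Ne.symm hji)) (hynn j)
  have hsum : ∑ i, (A.mulVec y) i = 0 := by
    have : ∑ i, (A.mulVec y) i = ∑ j, (∑ i, A i j) * y j := by
      simp only [Matrix.mulVec, dotProduct]
      rw [Finset.sum_comm]
      exact Finset.sum_congr rfl fun j _ => (Finset.sum_mul _ _ _).symm
    rw [this]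
    apply Finset.sum_eq_zero
    intro j _
    rw [hA.2 j, zero_mul]
  funext i
  have := (Finset.sum_eq_zero_iff_of_nonneg (fun i _ => hnn i)).mp hsum i (mem_univ i)
  simpa using this

theorem stmt3 {m : ℕ} (hm : 2 ≤ m) (A : Matrix (Fin m) (Fin m) ℝ)
    (hA : IsKirchhoff A)
    (hedge : ∃ i j, step A j i)
    (hconn : ∀ u v : Fin m, Relation.ReflTransGen (step A) u v) :
    ∃ b : Fin m → ℝ, (∀ j, 0 < b j) ∧ A.mulVec b = 0 ∧
      ∀ x : Fin m → ℝ, A.mulVec x = 0 → ∃ t : ℝ, x = t • b := by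
  haveI : NeZero m := ⟨by omega⟩
  -- nontrivial kernel via determinant
  have hdet : A.det = 0 := by
    have h1 : Aᵀ.mulVec (fun _ => (1 : ℝ)) = 0 := by
      funext i
      simp only [Matrix.mulVec, dotProduct, Matrix.transpose_apply, mul_one]
      simpa using hA.2 i
    have hne : (fun _ => (1 : ℝ)) ≠ (0 : Fin m → ℝ) := by
      intro h
      have := congrFun h ⟨0, by omega⟩
      simp at this
    have := Matrix.exists_mulVec_eq_zero_iff.mp ⟨_, hne, h1⟩
    simpa [Matrix.det_transpose] using this
  obtain ⟨x0, hx0ne, hx0k⟩ := Matrix.exists_mulVec_eq_zero_iff.mpr hdet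
  -- produce nonnegative nonzero kernel vector
  obtain ⟨y, hyk, hynn, hjpos⟩ :
      ∃ y : Fin m → ℝ, A.mulVec y = 0 ∧ (∀ k, 0 ≤ y k) ∧ ∃ j, 0 < y j := by
    by_cases hp : ∃ j, 0 < x0 j
    · obtain ⟨j, hj⟩ := hp
      exact ⟨fun k => max (x0 k) 0, pos_part_ker hA hx0k,
        fun k => le_max_right _ _, j, lt_max_iff.mpr (Or.inl hj)⟩
    · push_neg at hp
      obtain ⟨j, hj⟩ := Function.ne_iff.mp hx0ne
      have hj' : x0 j < 0 := lt_of_le_of_ne (hp j) (by simpa using hj)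
      have hnegk : A.mulVec (-x0) = 0 := by
        rw [Matrix.mulVec_neg, hx0k, neg_zero]
      exact ⟨fun k => max (-x0 k) 0, pos_part_ker hA hnegk,
        fun k => le_max_right _ _, j, lt_max_iff.mpr (Or.inl (by linarith))⟩
  have hb : ∀ i, 0 < y i := pos_of_nonneg hA hconn hyk hynn hjpos
  refine ⟨y, hb, hyk, ?_⟩
  intro x hx
  obtain ⟨i0, -, hi0⟩ := Finset.exists_min_image (univ : Finset (Fin m))
    (fun i => x i / y i) ⟨⟨0, by omega⟩, mem_univ _⟩
  set t : ℝ := x i0 / y i0 with ht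
  refine ⟨t, ?_⟩
  have hz : A.mulVec (x - t • y) = 0 := by
    rw [Matrix.mulVec_sub, Matrix.mulVec_smul, hx, hyk, smul_zero, sub_zero]
  have hznn : ∀ k, 0 ≤ (x - t • y) k := by
    intro k
    have h1 : t ≤ x k / y k := hi0 k (mem_univ k)
    have h2 : t * y k ≤ x k := (le_div_iff₀ (hb k)).mp h1
    simp only [Pi.sub_apply, Pi.smul_apply, smul_eq_mul]
    linarith
  have hz0 : (x - t • y) i0 = 0 := by
    simp only [Pi.sub_apply, Pi.smul_apply, smul_eq_mul, ht]
    rw [div_mul_eq_mul_div, mul_div_assoc, div_self (ne_of_gt (hb i0)), mul_one, sub_self]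
  have hzero : x - t • y = 0 := by
    by_contra hne
    obtain ⟨k, hk⟩ := Function.ne_iff.mp hne
    have hkpos : 0 < (x - t • y) k :=
      lt_of_le_of_ne (hznn k) (Ne.symm (by simpa using hk))
    have := pos_of_nonneg hA hconn hz hznn ⟨k, hkpos⟩ i0
    rw [hz0] at this
    exact lt_irrefl _ this
  have := sub_eq_zero.mp hzero
  exact this
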